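/- If I = (x_1,...,x_r)^m is the m-th power of the prime generated by variables x_1,...,x_r, then its polarization has irredundant irreducible primary decomposition P(I) = ∩ (x_{1,c_1},...,x_{r,c_r}), where the intersection runs over all tuples (c_1,...,c_r) with 1 ≤ c_j ≤ m for all j and c_1 + ... + c_r ≤ m + r − 1. -/
import Mathlib

open MvPolynomial Finset

variable {k : Type} [Field k] {r m : ℕ}

lemma prod_monomial_one {σ α : Type*} (s : Finset α) (f : α → (σ →₀ ℕ)) :
    ∏ x ∈ s, monomial (f x) (1 : k) = monomial (∑ x ∈ s, f x) 1 := by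
  induction s using Finset.cons_induction with
  | empty => simp
  | cons a s ha ih => rw [Finset.prod_cons, Finset.sum_cons, ih, monomial_mul, one_mul]

lemma exists_le_sum_aux (d : ℕ) : ∀ (B : Fin r → ℕ) (m : ℕ), m ≤ ∑ i, B i →
    (∑ i, B i) - m ≤ d → ∃ b : Fin r → ℕ, (∀ i, b i ≤ B i) ∧ ∑ i, b i = m := by
  induction d with
  | zero => exact fun B m h hd => ⟨B, fun i => le_rfl, by omega⟩
  | succ d ih =>
    intro B m h hd
    rcases Nat.eq_or_lt_of_le h with heq | hlt
    · exact ⟨B, fun i => le_rfl, heq.symm⟩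
    have : ∃ i, B i ≠ 0 := by
      by_contra hc
      push_neg at hc
      simp [hc] at hlt
    obtain ⟨i0, hi0⟩ := this
    set B' := Function.update B i0 (B i0 - 1) with hB'
    have hsum : ∑ i, B' i = (∑ i, B i) - 1 := by
      rw [hB', Finset.sum_update_of_mem (Finset.mem_univ i0)]
      have := Finset.add_sum_erase Finset.univ B (Finset.mem_univ i0)
      rw [Finset.erase_eq] at this
      omega
    obtain ⟨b, hb1, hb2⟩ := ih B' m (by omega) (by omega)
    refine ⟨b, fun i => ?_, hb2⟩
    have := hb1 i
    by_cases hi : i = i0 <;> simp [hB', hi, Function.update] at this ⊢ <;> omega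

lemma exists_le_sum (B : Fin r → ℕ) (m : ℕ) (h : m ≤ ∑ i, B i) :
    ∃ b : Fin r → ℕ, (∀ i, b i ≤ B i) ∧ ∑ i, b i = m :=
  exists_le_sum_aux _ B m h le_rfl

/-- exponent vector of the polarization of `∏ xᵢ^{bᵢ}` -/
noncomputable def Db (r m : ℕ) (b : Fin r → ℕ) : (Fin r × Fin m) →₀ ℕ :=
  ∑ i, ∑ j ∈ Finset.univ.filter fun j : Fin m => (j : ℕ) < b i, Finsupp.single (i, j) 1

lemma Db_apply (b : Fin r → ℕ) (a : Fin r) (t : Fin m) :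
    Db r m b (a, t) = if (t : ℕ) < b a then 1 else 0 := by
  rw [Db]
  rw [Finsupp.finset_sum_apply]
  rw [Finset.sum_eq_single a]
  · rw [Finsupp.finset_sum_apply]
    by_cases ht : (t : ℕ) < b a
    · rw [Finset.sum_eq_single t]
      · simp [ht]
      · intro j _ hj
        simp [Finsupp.single_apply, Prod.ext_iff, hj]
      · intro hnot
        simp [ht] at hnot
    · rw [if_neg ht]
      apply Finset.sum_eq_zero
      intro j hj
      simp only [Finset.mem_filter] at hj
      have : j ≠ t := fun h => ht (h ▸ hj.2)
      simp [Finsupp.single_apply, Prod.ext_iff, this]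
  · intro i _ hi
    rw [Finsupp.finset_sum_apply]
    apply Finset.sum_eq_zero
    intro j _
    simp [Finsupp.single_apply, Prod.ext_iff, hi]
  · simp

lemma prod_X_eq (b : Fin r → ℕ) :
    (∏ i, ∏ j ∈ Finset.univ.filter fun j : Fin m => (j : ℕ) < b i,
      (X (i, j) : MvPolynomial (Fin r × Fin m) k)) = monomial (Db r m b) 1 := by
  rw [Db]
  rw [← prod_monomial_one]
  apply Finset.prod_congr rfl
  intro i _
  rw [← prod_monomial_one]
  apply Finset.prod_congr rfl
  intro j _
  rfl

lemma key_lemma (hm : 0 < m) (v : (Fin r × Fin m) →₀ ℕ) :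
    (∃ b : Fin r → ℕ, (∑ i, b i) = m ∧ Db r m b ≤ v) ↔
      ∀ c : Fin r → Fin m, (∑ i, ((c i : ℕ) + 1)) ≤ m + r - 1 → ∃ i, v (i, c i) ≠ 0 := by
  constructor
  · rintro ⟨b, hb, hle⟩ c hc
    have hex : ∃ i, (c i : ℕ) < b i := by
      by_contra hno
      push_neg at hno
      have h1 : ∑ i, (b i + 1) ≤ ∑ i, ((c i : ℕ) + 1) :=
        Finset.sum_le_sum fun i _ => by have := hno i; omega
      rw [Finset.sum_add_distrib, hb] at h1
      simp at h1
      omega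
    obtain ⟨i, hi⟩ := hex
    refine ⟨i, ?_⟩
    have := hle (i, c i)
    rw [Db_apply, if_pos hi] at this
    omega
  · intro h
    -- B i = first slot j with v (i, j) = 0, or m if none
    have hP : ∀ i : Fin r, ∃ n, n = m ∨ ∃ hn : n < m, v (i, ⟨n, hn⟩) = 0 :=
      fun i => ⟨m, Or.inl rfl⟩
    set B : Fin r → ℕ := fun i => Nat.find (hP i) with hB
    have hBle : ∀ i, B i ≤ m := fun i => Nat.find_le (Or.inl rfl)
    have hBzero : ∀ i (h : B i < m), v (i, ⟨B i, h⟩) = 0 := by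
      intro i hilt
      have h0 := Nat.find_spec (hP i)
      rw [show Nat.find (hP i) = B i from rfl] at h0
      rcases h0 with h1 | ⟨h1, h2⟩
      · omega
      · exact h2
    have hBpos : ∀ i (t : Fin m), (t : ℕ) < B i → v (i, t) ≠ 0 := by
      intro i t ht hv
      exact Nat.find_min (hP i) ht (Or.inr ⟨t.2, by simpa using hv⟩)
    have hsum : m ≤ ∑ i, B i := by
      by_contra hno
      push_neg at hno
      have hlt : ∀ i, B i < m := fun i =>
        lt_of_le_of_lt (Finset.single_le_sum (fun i _ => Nat.zero_le (B i))
          (Finset.mem_univ i)) hno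
      set c : Fin r → Fin m := fun i => ⟨B i, hlt i⟩ with hc
      have hcval : (∑ i, ((c i : ℕ) + 1)) ≤ m + r - 1 := by
        rw [Finset.sum_add_distrib]
        simp only [hc]
        have : ∑ i : Fin r, (1 : ℕ) = r := by simp
        omega
      obtain ⟨i, hi⟩ := h c hcval
      exact hi (hBzero i (hlt i))
    obtain ⟨b, hb1, hb2⟩ := exists_le_sum B m hsum
    refine ⟨b, hb2, ?_⟩
    intro q
    obtain ⟨a, t⟩ := q
    rw [Db_apply]
    by_cases ht : (t : ℕ) < b a
    · rw [if_pos ht]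
      have := hBpos a t (lt_of_lt_of_le ht (hb1 a))
      omega
    · simp [ht]

lemma span_X_isPrime (c : Fin r → Fin m) :
    (Ideal.span (Set.range fun i => (X (i, c i) : MvPolynomial (Fin r × Fin m) k))).IsPrime := by
  set P := Ideal.span (Set.range fun i => (X (i, c i) : MvPolynomial (Fin r × Fin m) k)) with hP
  set T : Fin r × Fin m → MvPolynomial (Fin r × Fin m) k :=
    fun p => if p.2 = c p.1 then 0 else X p with hT
  have hker : P = RingHom.ker (aeval (R := k) T) := by
    apply le_antisymm
    · rw [hP, Ideal.span_le]
      rintro x ⟨i, rfl⟩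
      simp [RingHom.mem_ker, hT]
    · intro f hf
      rw [RingHom.mem_ker] at hf
      have hcomp : (Ideal.Quotient.mkₐ k P).comp (aeval T) = Ideal.Quotient.mkₐ k P := by
        apply MvPolynomial.algHom_ext
        intro p
        simp only [AlgHom.comp_apply, aeval_X]
        by_cases hp : p.2 = c p.1
        · rw [hT]
          simp only [if_pos hp, map_zero]
          symm
          rw [Ideal.Quotient.mkₐ_eq_mk, Ideal.Quotient.eq_zero_iff_mem]
          rw [show p = (p.1, c p.1) from Prod.ext rfl hp]
          exact Ideal.subset_span ⟨p.1, rfl⟩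
        · rw [hT]
          simp [if_neg hp]
      have h2 := AlgHom.congr_fun hcomp f
      simp only [AlgHom.comp_apply, hf, map_zero] at h2
      rw [← Ideal.Quotient.eq_zero_iff_mem]
      rw [Ideal.Quotient.mkₐ_eq_mk] at h2
      exact h2.symm
  rw [hker]
  exact RingHom.ker_isPrime _

lemma mem_span_X_range (f : MvPolynomial (Fin r × Fin m) k) (c : Fin r → Fin m) :
    f ∈ Ideal.span (Set.range fun i => (X (i, c i) : MvPolynomial (Fin r × Fin m) k)) ↔
      ∀ v ∈ f.support, ∃ i, v (i, c i) ≠ 0 := by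
  have hs : (Set.range fun i => (X (i, c i) : MvPolynomial (Fin r × Fin m) k)) =
      X '' (Set.range fun i => (i, c i)) := by
    rw [← Set.range_comp]; rfl
  rw [hs, mem_ideal_span_X_image]
  constructor
  · intro h v hv
    obtain ⟨p, ⟨i, rfl⟩, hp⟩ := h v hv
    exact ⟨i, hp⟩
  · intro h v hv
    obtain ⟨i, hi⟩ := h v hv
    exact ⟨(i, c i), ⟨i, rfl⟩, hi⟩

lemma mem_polar (f : MvPolynomial (Fin r × Fin m) k) :
    f ∈ Ideal.span {f : MvPolynomial (Fin r × Fin m) k | ∃ b : Fin r → ℕ,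
        (∑ i, b i) = m ∧
        f = ∏ i, ∏ j ∈ Finset.univ.filter fun j : Fin m => (j : ℕ) < b i, X (i, j)} ↔
      ∀ v ∈ f.support, ∃ b : Fin r → ℕ, (∑ i, b i) = m ∧ Db r m b ≤ v := by
  have hset : {f : MvPolynomial (Fin r × Fin m) k | ∃ b : Fin r → ℕ,
        (∑ i, b i) = m ∧
        f = ∏ i, ∏ j ∈ Finset.univ.filter fun j : Fin m => (j : ℕ) < b i, X (i, j)} =
      (fun s => monomial s (1 : k)) ''
        {s | ∃ b : Fin r → ℕ, (∑ i, b i) = m ∧ s = Db r m b} := by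
    ext g
    simp only [Set.mem_setOf_eq, Set.mem_image]
    constructor
    · rintro ⟨b, hb, rfl⟩
      exact ⟨Db r m b, ⟨b, hb, rfl⟩, (prod_X_eq b).symm⟩
    · rintro ⟨s, ⟨b, hb, rfl⟩, rfl⟩
      exact ⟨b, hb, (prod_X_eq b).symm⟩
  rw [hset, mem_ideal_span_monomial_image]
  refine forall₂_congr fun v hv => ?_
  constructor
  · rintro ⟨s, ⟨b, hb, rfl⟩, hle⟩
    exact ⟨b, hb, hle⟩
  · rintro ⟨b, hb, hle⟩
    exact ⟨_, ⟨b, hb, rfl⟩, hle⟩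

theorem polar_power_of_prime_decomposition' (k : Type) [Field k] (r m : ℕ)
    (hm : 0 < m) :
    Ideal.span {f : MvPolynomial (Fin r × Fin m) k | ∃ b : Fin r → ℕ,
        (∑ i, b i) = m ∧
        f = ∏ i, ∏ j ∈ Finset.univ.filter fun j : Fin m => (j : ℕ) < b i, X (i, j)} =
      (⨅ c ∈ {c : Fin r → Fin m | (∑ i, ((c i : ℕ) + 1)) ≤ m + r - 1},
        Ideal.span (Set.range fun i => (X (i, c i) : MvPolynomial (Fin r × Fin m) k))) ∧
    (∀ c ∈ {c : Fin r → Fin m | (∑ i, ((c i : ℕ) + 1)) ≤ m + r - 1},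
      (Ideal.span (Set.range fun i =>
        (X (i, c i) : MvPolynomial (Fin r × Fin m) k))).IsPrime) ∧
    (∀ c ∈ {c : Fin r → Fin m | (∑ i, ((c i : ℕ) + 1)) ≤ m + r - 1},
      ¬ (⨅ c' ∈ {c' : Fin r → Fin m |
            (∑ i, ((c' i : ℕ) + 1)) ≤ m + r - 1} \ {c},
          Ideal.span (Set.range fun i =>
            (X (i, c' i) : MvPolynomial (Fin r × Fin m) k))) ≤
        Ideal.span (Set.range fun i =>
          (X (i, c i) : MvPolynomial (Fin r × Fin m) k))) := by
  refine ⟨?_, fun c _ => span_X_isPrime c, ?_⟩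
  · ext f
    rw [mem_polar]
    simp only [Ideal.mem_iInf, Set.mem_setOf_eq, mem_span_X_range]
    constructor
    · intro h c hc v hv
      exact (key_lemma hm v).mp (h v hv) c hc
    · intro h v hv
      exact (key_lemma hm v).mpr fun c hc => h c hc v hv
  · intro c hc hle
    classical
    set D : (Fin r × Fin m) →₀ ℕ :=
      Finsupp.equivFunOnFinite.symm (fun p => if p.2 = c p.1 then 0 else 1) with hD
    have hDval : ∀ p : Fin r × Fin m, D p = if p.2 = c p.1 then 0 else 1 := by
      intro p
      rw [hD]
      simp [Finsupp.equivFunOnFinite]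
    have hw : (monomial D (1 : k)) ∈ (⨅ c' ∈ {c' : Fin r → Fin m |
            (∑ i, ((c' i : ℕ) + 1)) ≤ m + r - 1} \ {c},
          Ideal.span (Set.range fun i =>
            (X (i, c' i) : MvPolynomial (Fin r × Fin m) k))) := by
      simp only [Ideal.mem_iInf]
      intro c' hc'
      rw [mem_span_X_range]
      intro v hv
      rw [support_monomial, if_neg one_ne_zero, Finset.mem_singleton] at hv
      subst hv
      have hne : c' ≠ c := fun h => hc'.2 (by simp [h])
      obtain ⟨i, hi⟩ := Function.ne_iff.mp hne
      refine ⟨i, ?_⟩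
      rw [hDval]
      simp [hi]
    have hmem := hle hw
    rw [mem_span_X_range] at hmem
    obtain ⟨i, hi⟩ := hmem D (by rw [support_monomial, if_neg one_ne_zero]; simp)
    apply hi
    rw [hDval]
    simp


/-- for `I = (x_1,…,x_r)^m` (`m ≥ 1`), the polarization
`𝒫(I)` (generated by the polarizations of all monomials of degree `m` in
`x_1,…,x_r`) has the irredundant irreducible primary decomposition
`𝒫(I) = ⋂ (x_{1,c₁},…,x_{r,c_r})`, the intersection running over all tuples `c`
with `1 ≤ c_j ≤ m` and `∑ c_j ≤ m + r − 1` (here the `c_j` are 0-based, so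
`c_j ∈ Fin m` and the degree condition reads `∑ (c_j + 1) ≤ m + r − 1`). -/
theorem polar_power_of_prime_decomposition (k : Type) [Field k] (r m : ℕ)
    (hm : 0 < m) :
    Ideal.span {f : MvPolynomial (Fin r × Fin m) k | ∃ b : Fin r → ℕ,
        (∑ i, b i) = m ∧
        f = ∏ i, ∏ j ∈ Finset.univ.filter fun j : Fin m => (j : ℕ) < b i, X (i, j)} =
      (⨅ c ∈ {c : Fin r → Fin m | (∑ i, ((c i : ℕ) + 1)) ≤ m + r - 1},
        Ideal.span (Set.range fun i => (X (i, c i) : MvPolynomial (Fin r × Fin m) k))) ∧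
    (∀ c ∈ {c : Fin r → Fin m | (∑ i, ((c i : ℕ) + 1)) ≤ m + r - 1},
      (Ideal.span (Set.range fun i =>
        (X (i, c i) : MvPolynomial (Fin r × Fin m) k))).IsPrime) ∧
    (∀ c ∈ {c : Fin r → Fin m | (∑ i, ((c i : ℕ) + 1)) ≤ m + r - 1},
      ¬ (⨅ c' ∈ {c' : Fin r → Fin m |
            (∑ i, ((c' i : ℕ) + 1)) ≤ m + r - 1} \ {c},
          Ideal.span (Set.range fun i =>
            (X (i, c' i) : MvPolynomial (Fin r × Fin m) k))) ≤
        Ideal.span (Set.range fun i =>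
          (X (i, c i) : MvPolynomial (Fin r × Fin m) k))) := by
  exact polar_power_of_prime_decomposition' k r m hm
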